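/- Let ρ : ℝⁿ → [0,∞) be an integrable log-concave probability density, and let γ_n(x) = (2π)^{-n/2} exp(-|x|²/2) be the standard Gaussian density. Then the convolution f = ρ * γ_n satisfies ∇²(log f)(x) ≥ -Id for all x ∈ ℝⁿ, in the sense of symmetric matrices. -/

import Mathlib

open MeasureTheory Real

private lemma abs_mul_exp_le (u : ℝ) : |u| * Real.exp (-(u ^ 2 / 2)) ≤ 1 := by
  have h2 := Real.add_one_le_exp (u ^ 2 / 2)
  have h1 : |u| ≤ Real.exp (u ^ 2 / 2) := by
    nlinarith [sq_nonneg (|u| - 1), sq_abs u]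
  calc |u| * Real.exp (-(u ^ 2 / 2)) ≤ Real.exp (u ^ 2 / 2) * Real.exp (-(u ^ 2 / 2)) :=
        mul_le_mul_of_nonneg_right h1 (Real.exp_pos _).le
    _ = 1 := by rw [← Real.exp_add]; simp

private lemma sq_mul_exp_le (u : ℝ) : u ^ 2 * Real.exp (-(u ^ 2 / 2)) ≤ 2 := by
  have h2 := Real.add_one_le_exp (u ^ 2 / 2)
  have h1 : u ^ 2 ≤ 2 * Real.exp (u ^ 2 / 2) := by nlinarith [Real.exp_pos (u ^ 2 / 2)]
  calc u ^ 2 * Real.exp (-(u ^ 2 / 2)) ≤ (2 * Real.exp (u ^ 2 / 2)) * Real.exp (-(u ^ 2 / 2)) :=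
        mul_le_mul_of_nonneg_right h1 (Real.exp_pos _).le
    _ = 2 := by rw [mul_assoc, ← Real.exp_add]; simp

private lemma master_bound (t s : ℝ) :
    (1 + |s|) ^ 2 * Real.exp (-(t * s) - s ^ 2 / 2) ≤ Real.exp (t ^ 2 / 2) * (|t| + 3) ^ 2 := by
  have h1 : -(t * s) - s ^ 2 / 2 = t ^ 2 / 2 + -((s + t) ^ 2 / 2) := by ring
  rw [h1, Real.exp_add, show (1 + |s|) ^ 2 * (Real.exp (t ^ 2 / 2) * Real.exp (-((s + t) ^ 2 / 2)))
      = Real.exp (t ^ 2 / 2) * ((1 + |s|) ^ 2 * Real.exp (-((s + t) ^ 2 / 2))) from by ring]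
  refine mul_le_mul_of_nonneg_left ?_ (Real.exp_pos _).le
  have hu := abs_mul_exp_le (s + t)
  have hu2 := sq_mul_exp_le (s + t)
  have hE1 : Real.exp (-((s + t) ^ 2 / 2)) ≤ 1 :=
    Real.exp_le_one_iff.mpr (by nlinarith [sq_nonneg (s + t)])
  have hE0 : (0:ℝ) < Real.exp (-((s + t) ^ 2 / 2)) := Real.exp_pos _
  have hs : |s| ≤ |s + t| + |t| := by simpa using abs_sub (s + t) t
  have hmono : (1 + |s|) ^ 2 * Real.exp (-((s + t) ^ 2 / 2))
      ≤ (1 + |t| + |s + t|) ^ 2 * Real.exp (-((s + t) ^ 2 / 2)) := by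
    refine mul_le_mul_of_nonneg_right ?_ hE0.le
    nlinarith [abs_nonneg s, abs_nonneg t, abs_nonneg (s + t)]
  have hexp : (1 + |t| + |s + t|) ^ 2 * Real.exp (-((s + t) ^ 2 / 2))
      = (1 + |t|) ^ 2 * Real.exp (-((s + t) ^ 2 / 2))
        + 2 * (1 + |t|) * (|s + t| * Real.exp (-((s + t) ^ 2 / 2)))
        + (s + t) ^ 2 * Real.exp (-((s + t) ^ 2 / 2)) := by
    rw [← sq_abs (s + t)]; ring
  nlinarith [abs_nonneg t, mul_le_mul_of_nonneg_left hE1 (sq_nonneg (1 + |t|)),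
    mul_le_mul_of_nonneg_left hu (by positivity : (0:ℝ) ≤ 2 * (1 + |t|))]

private lemma C_mono (t s : ℝ) (h : |s| ≤ |t| + 1) :
    Real.exp (s ^ 2 / 2) * (|s| + 3) ^ 2
      ≤ Real.exp ((|t| + 1) ^ 2 / 2) * ((|t| + 1) + 3) ^ 2 := by
  have h1 : Real.exp (s ^ 2 / 2) ≤ Real.exp ((|t| + 1) ^ 2 / 2) :=
    Real.exp_le_exp.mpr (by nlinarith [abs_nonneg s, sq_abs s])
  have h2 : (|s| + 3) ^ 2 ≤ ((|t| + 1) + 3) ^ 2 := by nlinarith [abs_nonneg s]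
  exact mul_le_mul h1 h2 (by positivity) (Real.exp_pos _).le

set_option maxHeartbeats 2000000 in
theorem hessian_log_gaussian_convolution (n : ℕ)
    (ρ : EuclideanSpace ℝ (Fin n) → ℝ)
    (hρ0 : ∀ x, 0 ≤ ρ x) (hρint : Integrable ρ) (hρ1 : ∫ x, ρ x = 1)
    (hlc : ∀ x y : EuclideanSpace ℝ (Fin n), ∀ l : ℝ, 0 ≤ l → l ≤ 1 →
      ρ x ^ l * ρ y ^ (1 - l) ≤ ρ (l • x + (1 - l) • y))
    (γ : EuclideanSpace ℝ (Fin n) → ℝ)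
    (hγ : γ = fun x => (2 * π) ^ (-(n : ℝ) / 2) * Real.exp (-‖x‖ ^ 2 / 2))
    (f : EuclideanSpace ℝ (Fin n) → ℝ)
    (hf : f = fun x => ∫ y, ρ y * γ (x - y)) :
    ∀ x v : EuclideanSpace ℝ (Fin n), ‖v‖ = 1 →
      ∃ g' : ℝ → ℝ,
        (∀ t : ℝ, HasDerivAt (fun s => Real.log (f (x + s • v))) (g' t) t) ∧
        ∃ d : ℝ, HasDerivAt g' d 0 ∧ -1 ≤ d := by
  subst hγ hf
  intro x v hv
  simp only []
  have hπ : (0:ℝ) < 2 * π := by positivity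
  set c : ℝ := (2 * π) ^ (-(n : ℝ) / 2) with hcdef
  have hc : 0 < c := Real.rpow_pos_of_pos hπ _
  set A : EuclideanSpace ℝ (Fin n) → ℝ := fun y => (inner ℝ (x - y) v : ℝ) with hA
  set w : EuclideanSpace ℝ (Fin n) → ℝ :=
    fun y => ρ y * (c * Real.exp (-‖x - y‖ ^ 2 / 2)) with hw
  have hAcont : Continuous A := by
    rw [hA]; exact Continuous.inner (continuous_const.sub continuous_id) continuous_const
  have hwmeas : AEStronglyMeasurable w volume := by
    rw [hw]
    exact hρint.aestronglyMeasurable.mul (Continuous.aestronglyMeasurable (by continuity))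
  have hw0 : ∀ y, 0 ≤ w y := by
    intro y; simp only [hw]; exact mul_nonneg (hρ0 y) (by positivity)
  have hAle : ∀ y, |A y| ≤ ‖x - y‖ := by
    intro y; simp only [hA]
    calc |(inner ℝ (x - y) v : ℝ)| ≤ ‖x - y‖ * ‖v‖ := abs_real_inner_le_norm _ _
      _ = ‖x - y‖ := by rw [hv, mul_one]
  -- pointwise bound
  have hbd : ∀ (g : EuclideanSpace ℝ (Fin n) → ℝ) (C s : ℝ),
      (∀ y, |g y| ≤ (1 + |A y|) ^ 2) →
      Real.exp (s ^ 2 / 2) * (|s| + 3) ^ 2 ≤ C →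
      ∀ y, ‖g y * (Real.exp (-(s * A y)) * w y)‖ ≤ ρ y * (c * C) := by
    intro g C s hg hC y
    have hnorm : ‖g y * (Real.exp (-(s * A y)) * w y)‖
        = |g y| * (Real.exp (-(s * A y)) * (ρ y * (c * Real.exp (-‖x - y‖ ^ 2 / 2)))) := by
      simp only [hw, Real.norm_eq_abs, abs_mul, Real.abs_exp, abs_of_nonneg (hρ0 y),
        abs_of_nonneg hc.le]
    rw [hnorm]
    have h1 : Real.exp (-‖x - y‖ ^ 2 / 2) ≤ Real.exp (-(A y ^ 2 / 2)) := by
      apply Real.exp_le_exp.mpr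
      have h := hAle y
      have h2 : A y ^ 2 ≤ ‖x - y‖ ^ 2 := by
        nlinarith [abs_nonneg (A y), sq_abs (A y), norm_nonneg (x - y)]
      linarith
    have hmain : |g y| * (Real.exp (-(s * A y)) * Real.exp (-‖x - y‖ ^ 2 / 2)) ≤ C := by
      calc |g y| * (Real.exp (-(s * A y)) * Real.exp (-‖x - y‖ ^ 2 / 2))
          ≤ (1 + |A y|) ^ 2 * (Real.exp (-(s * A y)) * Real.exp (-‖x - y‖ ^ 2 / 2)) :=
            mul_le_mul_of_nonneg_right (hg y) (by positivity)
        _ ≤ (1 + |A y|) ^ 2 * (Real.exp (-(s * A y)) * Real.exp (-(A y ^ 2 / 2))) :=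
            mul_le_mul_of_nonneg_left
              (mul_le_mul_of_nonneg_left h1 (Real.exp_pos _).le) (by positivity)
        _ = (1 + |A y|) ^ 2 * Real.exp (-(s * A y) - A y ^ 2 / 2) := by
            rw [← Real.exp_add,
              show -(s * A y) + -(A y ^ 2 / 2) = -(s * A y) - A y ^ 2 / 2 from by ring]
        _ ≤ Real.exp (s ^ 2 / 2) * (|s| + 3) ^ 2 := master_bound s (A y)
        _ ≤ C := hC
    calc |g y| * (Real.exp (-(s * A y)) * (ρ y * (c * Real.exp (-‖x - y‖ ^ 2 / 2))))
        = (ρ y * c) * (|g y| * (Real.exp (-(s * A y)) * Real.exp (-‖x - y‖ ^ 2 / 2))) := by ring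
      _ ≤ (ρ y * c) * C :=
          mul_le_mul_of_nonneg_left hmain (mul_nonneg (hρ0 y) hc.le)
      _ = ρ y * (c * C) := by ring
  -- integrability
  have hint : ∀ (g : EuclideanSpace ℝ (Fin n) → ℝ), Continuous g →
      (∀ y, |g y| ≤ (1 + |A y|) ^ 2) → ∀ s : ℝ,
      Integrable (fun y => g y * (Real.exp (-(s * A y)) * w y)) := by
    intro g hg hgle s
    refine Integrable.mono'
      (hρint.mul_const (c * (Real.exp (s ^ 2 / 2) * (|s| + 3) ^ 2))) ?_
      (Filter.Eventually.of_forall (hbd g _ s hgle le_rfl))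
    exact hg.aestronglyMeasurable.mul
      ((((continuous_const.mul hAcont : Continuous fun y => s * A y).neg).rexp).aestronglyMeasurable.mul hwmeas)
  have hb1 : ∀ y, |(1:ℝ)| ≤ (1 + |A y|) ^ 2 := fun y => by
    rw [abs_one]; nlinarith [abs_nonneg (A y)]
  have hbneg : ∀ y, |(-A y)| ≤ (1 + |A y|) ^ 2 := fun y => by
    rw [abs_neg]; nlinarith [abs_nonneg (A y)]
  have hbsq : ∀ y, |A y ^ 2| ≤ (1 + |A y|) ^ 2 := fun y => by
    rw [abs_of_nonneg (sq_nonneg (A y))]; nlinarith [abs_nonneg (A y), sq_abs (A y)]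
  -- positivity of the denominator
  have hψpos : ∀ s : ℝ, 0 < ∫ y, Real.exp (-(s * A y)) * w y := by
    intro s
    have hi : Integrable (fun y => Real.exp (-(s * A y)) * w y) := by
      simpa using hint (fun _ => (1:ℝ)) continuous_const hb1 s
    refine (integral_pos_iff_support_of_nonneg
      (fun y => mul_nonneg (Real.exp_pos _).le (hw0 y)) hi).mpr ?_
    have hsupp : Function.support (fun y => Real.exp (-(s * A y)) * w y)
        = Function.support ρ := by
      ext y
      simp only [Function.mem_support, hw]
      constructor
      · intro h hy; exact h (by rw [hy]; ring)
      · intro h; exact mul_ne_zero (Real.exp_ne_zero _) (mul_ne_zero h (by positivity))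
    rw [hsupp]
    have h0 : 0 < ∫ y, ρ y := by rw [hρ1]; norm_num
    exact (integral_pos_iff_support_of_nonneg hρ0 hρint).mp h0
  -- the key algebraic identity
  have hkey : ∀ (t : ℝ) (y : EuclideanSpace ℝ (Fin n)),
      ρ y * (c * Real.exp (-‖x + t • v - y‖ ^ 2 / 2))
        = Real.exp (-(t ^ 2 / 2)) * (Real.exp (-(t * A y)) * w y) := by
    intro t y
    have h1 : x + t • v - y = (x - y) + t • v := by abel
    have h2 : ‖x + t • v - y‖ ^ 2 = ‖x - y‖ ^ 2 + 2 * (t * A y) + t ^ 2 := by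
      rw [h1, @norm_add_sq_real, real_inner_smul_right, norm_smul, Real.norm_eq_abs, hv,
        mul_one, sq_abs]
    rw [h2, show -(‖x - y‖ ^ 2 + 2 * (t * A y) + t ^ 2) / 2
        = -(t ^ 2 / 2) + (-(t * A y) + -‖x - y‖ ^ 2 / 2) from by ring,
      Real.exp_add, Real.exp_add]
    simp only [hw]; ring
  have hfψeq : ∀ s : ℝ, (∫ y, ρ y * (c * Real.exp (-‖x + s • v - y‖ ^ 2 / 2)))
      = Real.exp (-(s ^ 2 / 2)) * ∫ y, Real.exp (-(s * A y)) * w y := by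
    intro s
    rw [show (fun y => ρ y * (c * Real.exp (-‖x + s • v - y‖ ^ 2 / 2)))
        = fun y => Real.exp (-(s ^ 2 / 2)) * (Real.exp (-(s * A y)) * w y) from
        funext (hkey s), integral_const_mul]
  -- derivative facts
  have hball : ∀ t s : ℝ, s ∈ Metric.ball t 1 → |s| ≤ |t| + 1 := by
    intro t s hs
    rw [Metric.mem_ball, Real.dist_eq] at hs
    have := abs_sub_abs_le_abs_sub s t
    linarith
  have hd1 : ∀ (y : EuclideanSpace ℝ (Fin n)) (s : ℝ),
      HasDerivAt (fun u : ℝ => Real.exp (-(u * A y)) * w y)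
        (-A y * (Real.exp (-(s * A y)) * w y)) s := by
    intro y s
    have h1 : HasDerivAt (fun u : ℝ => -(u * A y)) (-A y) s := (hasDerivAt_mul_const (A y)).neg
    have h2 := (h1.exp).mul_const (w y)
    exact h2.congr_deriv (by ring)
  have hd2 : ∀ (y : EuclideanSpace ℝ (Fin n)) (s : ℝ),
      HasDerivAt (fun u : ℝ => -A y * (Real.exp (-(u * A y)) * w y))
        (A y ^ 2 * (Real.exp (-(s * A y)) * w y)) s := by
    intro y s
    have h2 := (hd1 y s).const_mul (-A y)
    exact h2.congr_deriv (by ring)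
  have hDψ : ∀ t : ℝ, HasDerivAt (fun s : ℝ => ∫ y, Real.exp (-(s * A y)) * w y)
      (∫ y, -A y * (Real.exp (-(t * A y)) * w y)) t := by
    intro t
    have H := hasDerivAt_integral_of_dominated_loc_of_deriv_le (μ := volume) (x₀ := t) (s := Metric.ball t 1)
      (F := fun s y => Real.exp (-(s * A y)) * w y)
      (F' := fun s y => -A y * (Real.exp (-(s * A y)) * w y))
      (bound := fun y => ρ y * (c * (Real.exp ((|t| + 1) ^ 2 / 2) * ((|t| + 1) + 3) ^ 2)))
      (Metric.ball_mem_nhds t one_pos)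
      (Filter.Eventually.of_forall fun s =>
        (((continuous_const.mul hAcont : Continuous fun y => s * A y).neg).rexp).aestronglyMeasurable.mul hwmeas)
      (by simpa using hint (fun _ => (1:ℝ)) continuous_const hb1 t)
      ((hAcont.neg).aestronglyMeasurable.mul
        ((((continuous_const.mul hAcont : Continuous fun y => t * A y).neg).rexp).aestronglyMeasurable.mul hwmeas))
      (Filter.Eventually.of_forall fun y s hs =>
        hbd (fun y => -A y) _ s hbneg (C_mono t s (hball t s hs)) y)
      (hρint.mul_const _)
      (Filter.Eventually.of_forall fun y s _ => hd1 y s)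
    exact H.2
  have hDψ₁ : ∀ t : ℝ, HasDerivAt (fun s : ℝ => ∫ y, -A y * (Real.exp (-(s * A y)) * w y))
      (∫ y, A y ^ 2 * (Real.exp (-(t * A y)) * w y)) t := by
    intro t
    have H := hasDerivAt_integral_of_dominated_loc_of_deriv_le (μ := volume) (x₀ := t) (s := Metric.ball t 1)
      (F := fun s y => -A y * (Real.exp (-(s * A y)) * w y))
      (F' := fun s y => A y ^ 2 * (Real.exp (-(s * A y)) * w y))
      (bound := fun y => ρ y * (c * (Real.exp ((|t| + 1) ^ 2 / 2) * ((|t| + 1) + 3) ^ 2)))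
      (Metric.ball_mem_nhds t one_pos)
      (Filter.Eventually.of_forall fun s =>
        (hAcont.neg).aestronglyMeasurable.mul
          ((((continuous_const.mul hAcont : Continuous fun y => s * A y).neg).rexp).aestronglyMeasurable.mul hwmeas))
      (hint (fun y => -A y) hAcont.neg hbneg t)
      (((hAcont.pow 2)).aestronglyMeasurable.mul
        ((((continuous_const.mul hAcont : Continuous fun y => t * A y).neg).rexp).aestronglyMeasurable.mul hwmeas))
      (Filter.Eventually.of_forall fun y s hs =>
        hbd (fun y => A y ^ 2) _ s hbsq (C_mono t s (hball t s hs)) y)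
      (hρint.mul_const _)
      (Filter.Eventually.of_forall fun y s _ => hd2 y s)
    exact H.2
  refine ⟨fun t => -t + (∫ y, -A y * (Real.exp (-(t * A y)) * w y))
      / (∫ y, Real.exp (-(t * A y)) * w y), fun t => ?_, ?_⟩
  · -- first derivative
    have hlogeq : (fun s : ℝ => Real.log (∫ y, ρ y * (c * Real.exp (-‖x + s • v - y‖ ^ 2 / 2))))
        = fun s : ℝ => -(s ^ 2 / 2) + Real.log (∫ y, Real.exp (-(s * A y)) * w y) := by
      funext s
      rw [hfψeq s, Real.log_mul (Real.exp_ne_zero _) (hψpos s).ne', Real.log_exp]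
    rw [hlogeq]
    have h1 : HasDerivAt (fun s : ℝ => -(s ^ 2 / 2)) (-t) t := by
      have h := ((hasDerivAt_pow 2 t).div_const 2).neg
      exact h.congr_deriv (by norm_num)
    exact h1.add ((hDψ t).log (hψpos t).ne')
  · -- second derivative at 0
    set D0 : ℝ := ∫ y, Real.exp (-((0:ℝ) * A y)) * w y with hD0
    set N0 : ℝ := ∫ y, -A y * (Real.exp (-((0:ℝ) * A y)) * w y) with hN0
    set M0 : ℝ := ∫ y, A y ^ 2 * (Real.exp (-((0:ℝ) * A y)) * w y) with hM0
    have hDpos : 0 < D0 := by rw [hD0]; exact hψpos 0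
    have hI0 : Integrable (fun y => Real.exp (-((0:ℝ) * A y)) * w y) := by
      simpa using hint (fun _ => (1:ℝ)) continuous_const hb1 0
    have hI1 : Integrable (fun y => -A y * (Real.exp (-((0:ℝ) * A y)) * w y)) :=
      hint (fun y => -A y) hAcont.neg hbneg 0
    have hI2 : Integrable (fun y => A y ^ 2 * (Real.exp (-((0:ℝ) * A y)) * w y)) :=
      hint (fun y => A y ^ 2) (hAcont.pow 2) hbsq 0
    have hdiv := (hDψ₁ 0).div (hDψ 0) (hψpos 0).ne'
    have hlin : HasDerivAt (fun t : ℝ => -t) (-1 : ℝ) 0 := by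
      exact (hasDerivAt_id (0:ℝ)).neg
    refine ⟨-1 + (M0 * D0 - N0 * N0) / D0 ^ 2, ?_, ?_⟩
    · have := hlin.add hdiv
      rw [hM0, hN0, hD0]
      exact this
    · -- Cauchy-Schwarz
      have hqnn : 0 ≤ ∫ y, (D0 * A y + N0) ^ 2 * (Real.exp (-((0:ℝ) * A y)) * w y) :=
        integral_nonneg fun y => mul_nonneg (sq_nonneg _)
          (mul_nonneg (Real.exp_pos _).le (hw0 y))
      have hqeq : (∫ y, (D0 * A y + N0) ^ 2 * (Real.exp (-((0:ℝ) * A y)) * w y))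
          = D0 ^ 2 * M0 - D0 * N0 ^ 2 := by
        have hfun : (fun y => (D0 * A y + N0) ^ 2 * (Real.exp (-((0:ℝ) * A y)) * w y))
            = fun y => D0 ^ 2 * (A y ^ 2 * (Real.exp (-((0:ℝ) * A y)) * w y))
              + ((-(2 * D0 * N0)) * (-A y * (Real.exp (-((0:ℝ) * A y)) * w y))
                + N0 ^ 2 * (Real.exp (-((0:ℝ) * A y)) * w y)) := by
          funext y; ring
        have hI12 : Integrable (fun y =>
            (-(2 * D0 * N0)) * (-A y * (Real.exp (-((0:ℝ) * A y)) * w y))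
              + N0 ^ 2 * (Real.exp (-((0:ℝ) * A y)) * w y)) :=
          (hI1.const_mul _).add (hI0.const_mul _)
        rw [hfun, integral_add (hI2.const_mul _) hI12,
          integral_add (hI1.const_mul _) (hI0.const_mul _),
          integral_const_mul, integral_const_mul, integral_const_mul, ← hM0, ← hN0, ← hD0]
        ring
      have hq2 : 0 ≤ D0 ^ 2 * M0 - D0 * N0 ^ 2 := by rw [← hqeq]; exact hqnn
      clear_value M0 N0 D0
      have hcs : N0 * N0 ≤ M0 * D0 := by nlinarith
      have hnn : 0 ≤ (M0 * D0 - N0 * N0) / D0 ^ 2 :=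
        div_nonneg (by linarith) (sq_nonneg _)
      linarith
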